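/- Let n, δ, k, a, t be positive integers such that δ divides n, k divides a·t·n, and δ + k = a·(4t − 1). Then x₁ = a·t·n/k, x₂ = a·t·(n/δ), and x₃ = t·n are positive integers satisfying the identity 4/n = 1/x₁ + 1/x₂ + 1/x₃. -/

import Mathlib

theorem stmt_12 (n δ a t k : ℕ) (hn : 0 < n) (hδpos : 0 < δ)
    (ha : 0 < a) (ht : 0 < t) (hk : 0 < k)
    (hδ : δ ∣ n) (hkdvd : k ∣ a * t * n)
    (hsum : δ + k = a * (4 * t - 1)) :
    0 < a * t * n / k ∧ 0 < a * t * (n / δ) ∧ 0 < t * n ∧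
    (4 : ℚ) / n = 1 / (a * t * n / k : ℕ) + 1 / (a * t * (n / δ) : ℕ) + 1 / (t * n : ℕ) := by
  refine ⟨Nat.div_pos (Nat.le_of_dvd (by positivity) hkdvd) hk,
    by have := Nat.div_pos (Nat.le_of_dvd hn hδ) hδpos; positivity,
    by positivity, ?_⟩
  have h1 : ((a * t * n / k : ℕ) : ℚ) = (a * t * n : ℚ) / k := by
    rw [Nat.cast_div hkdvd (by exact_mod_cast hk.ne')]; push_cast; ring
  have h2 : ((n / δ : ℕ) : ℚ) = (n : ℚ) / δ := by
    rw [Nat.cast_div hδ (by exact_mod_cast hδpos.ne')]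
  have hsq : (δ : ℚ) + k = a * (4 * t - 1) := by
    have := hsum
    have h4 : 1 ≤ 4 * t := by omega
    push_cast [Nat.cast_sub h4] at this ⊢
    exact_mod_cast this
  push_cast [h1, h2]
  have hnq : (n : ℚ) ≠ 0 := by positivity
  have hkq : (k : ℚ) ≠ 0 := by positivity
  have haq : (a : ℚ) ≠ 0 := by positivity
  have htq : (t : ℚ) ≠ 0 := by positivity
  have hδq : (δ : ℚ) ≠ 0 := by positivity
  field_simp
  linear_combination (-1:ℚ)*hsq
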